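/- Let g_0(x) = 1 − x₁² − x₂² and g_i(x) = (x₁ − a_i)² + (x₂ − b_i)² − R_i² for i = 1,…,m−1 with (a_i,b_i) ∈ ℝ², R_i > 0, and let S = {x ∈ ℝ² : g_k(x) ≥ 0 for all k}. Suppose i ≠ j are indices whose circles have distinct centers, and suppose that each of the circles S_i = {x : g_i(x) = 0} and S_j = {x : g_j(x) = 0} contains a nonempty open arc lying in the boundary of S. Then the polynomial g_i·g_j admits no representation of the form g_i g_j = Σ_{l=0}^N r_l² + Σ_{k=0}^{m−1} (Σ_{l=0}^N r_{kl}²)·g_k with N ∈ ℕ and r_l, r_{kl} ∈ ℝ[x₁,x₂]. -/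

import Mathlib

open MvPolynomial

/-- `g₀(x) = 1 - x₁² - x₂²`. -/
noncomputable def gDisk : MvPolynomial (Fin 2) ℝ :=
  1 - X 0 ^ 2 - X 1 ^ 2

/-- `g(x) = (x₁ - a)² + (x₂ - b)² - R²`. -/
noncomputable def gHole (a b R : ℝ) : MvPolynomial (Fin 2) ℝ :=
  (X 0 - C a) ^ 2 + (X 1 - C b) ^ 2 - C R ^ 2


noncomputable def rpt (a b ρ : ℝ) (θ : ℝ) : Fin 2 → ℝ :=
  Fin.cons (a + ρ * Real.cos θ) (fun _ => b + ρ * Real.sin θ)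

noncomputable def cpt (a b ρ : ℝ) (z : ℂ) : Fin 2 → ℂ :=
  Fin.cons ((a : ℂ) + (ρ : ℂ) * Complex.cos z) (fun _ => (b : ℂ) + (ρ : ℂ) * Complex.sin z)

noncomputable def cev (a b ρ : ℝ) (P : MvPolynomial (Fin 2) ℝ) (z : ℂ) : ℂ :=
  eval₂ (algebraMap ℝ ℂ) (cpt a b ρ z) P

lemma cev_real (a b ρ : ℝ) (P : MvPolynomial (Fin 2) ℝ) (θ : ℝ) :
    cev a b ρ P (θ : ℂ) = ((eval (rpt a b ρ θ) P : ℝ) : ℂ) := by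
  have h := MvPolynomial.eval₂_comp_left (algebraMap ℝ ℂ) (RingHom.id ℝ) (rpt a b ρ θ) P
  simp only [RingHom.comp_id] at h
  have heq : eval₂ (RingHom.id ℝ) (rpt a b ρ θ) P = eval (rpt a b ρ θ) P := rfl
  rw [heq] at h
  have h2 : (algebraMap ℝ ℂ) (eval (rpt a b ρ θ) P) = ((eval (rpt a b ρ θ) P : ℝ) : ℂ) := rfl
  rw [h2] at h
  rw [h]
  unfold cev
  congr 1
  funext idx
  refine Fin.cases ?_ (fun i => ?_) idx <;>
    simp [rpt, cpt, Function.comp, Complex.ofReal_cos, Complex.ofReal_sin]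

lemma cev_differentiable (a b ρ : ℝ) (P : MvPolynomial (Fin 2) ℝ) :
    Differentiable ℂ (cev a b ρ P) := by
  have : ∀ (Q : MvPolynomial (Fin 2) ℝ),
      Differentiable ℂ (fun z => eval₂ (algebraMap ℝ ℂ) (cpt a b ρ z) Q) := by
    intro Q
    induction Q using MvPolynomial.induction_on with
    | C c =>
        simp only [eval₂_C]
        exact differentiable_const _
    | add p q hp hq =>
        simp only [eval₂_add]
        exact hp.add hq
    | mul_X p n hp =>
        simp only [eval₂_mul, eval₂_X]
        refine hp.mul ?_
        refine Fin.cases ?_ (fun i => ?_) n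
        · simp only [cpt, Fin.cons_zero]
          exact (differentiable_const _).add
            ((differentiable_const _).mul Complex.differentiable_cos)
        · simp only [cpt, Fin.cons_succ]
          exact (differentiable_const _).add
            ((differentiable_const _).mul Complex.differentiable_sin)
  exact this P

lemma cev_continuous (a b ρ : ℝ) (P : MvPolynomial (Fin 2) ℝ) :
    Continuous (cev a b ρ P) := (cev_differentiable a b ρ P).continuous

lemma cev_zero_of_interval (a b ρ : ℝ) (P : MvPolynomial (Fin 2) ℝ) {t₁ t₂ : ℝ}
    (h : t₁ < t₂) (hv : ∀ θ ∈ Set.Ioo t₁ t₂, eval (rpt a b ρ θ) P = 0) :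
    ∀ z : ℂ, cev a b ρ P z = 0 := by
  have hana : AnalyticOnNhd ℂ (cev a b ρ P) Set.univ :=
    (cev_differentiable a b ρ P).differentiableOn.analyticOnNhd isOpen_univ
  set θ₀ : ℝ := (t₁ + t₂) / 2 with hθ₀
  have hθ₀m : θ₀ ∈ Set.Ioo t₁ t₂ := ⟨by rw [hθ₀]; linarith, by rw [hθ₀]; linarith⟩
  have hfreq : ∃ᶠ z in nhdsWithin (θ₀ : ℂ) {(θ₀ : ℂ)}ᶜ, cev a b ρ P z = 0 := by
    rw [Filter.frequently_iff]
    intro U hU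
    rw [Metric.mem_nhdsWithin_iff] at hU
    obtain ⟨ε, hε, hsub⟩ := hU
    set δ : ℝ := min (ε / 2) ((t₂ - θ₀) / 2) with hδ
    have hδ0 : 0 < δ := lt_min (by linarith) (by have := hθ₀m.2; linarith)
    refine ⟨((θ₀ + δ : ℝ) : ℂ), hsub ⟨?_, ?_⟩, ?_⟩
    · rw [Metric.mem_ball, Complex.isometry_ofReal.dist_eq, Real.dist_eq,
        abs_of_pos (by linarith : (0:ℝ) < θ₀ + δ - θ₀)]
      calc θ₀ + δ - θ₀ = δ := by ring
        _ ≤ ε / 2 := min_le_left _ _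
        _ < ε := by linarith
    · simp only [Set.mem_compl_iff, Set.mem_singleton_iff]
      intro hc
      have : (θ₀ + δ : ℝ) = θ₀ := by exact_mod_cast hc
      linarith
    · rw [cev_real]
      norm_cast
      apply hv
      refine ⟨by have := hθ₀m.1; linarith, ?_⟩
      have : δ ≤ (t₂ - θ₀)/2 := min_le_right _ _
      linarith
  have := hana.eqOn_zero_of_preconnected_of_frequently_eq_zero isPreconnected_univ
    (Set.mem_univ _) hfreq
  intro z
  exact this (Set.mem_univ z)

lemma cev_real_zero (a b ρ : ℝ) (P : MvPolynomial (Fin 2) ℝ) {t₁ t₂ : ℝ}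
    (h : t₁ < t₂) (hv : ∀ θ ∈ Set.Ioo t₁ t₂, eval (rpt a b ρ θ) P = 0) :
    ∀ θ : ℝ, eval (rpt a b ρ θ) P = 0 := by
  intro θ
  have := cev_zero_of_interval a b ρ P h hv θ
  rw [cev_real] at this
  exact_mod_cast this

lemma polar (u v : ℝ) : ∃ θ : ℝ,
    u = Real.sqrt (u^2 + v^2) * Real.cos θ ∧ v = Real.sqrt (u^2 + v^2) * Real.sin θ := by
  set K := Real.sqrt (u^2 + v^2) with hK
  have hK0 : 0 ≤ K := Real.sqrt_nonneg _
  have hK2 : K^2 = u^2 + v^2 := Real.sq_sqrt (by positivity)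
  rcases eq_or_lt_of_le hK0 with h0 | hpos
  · have : u^2 + v^2 = 0 := by rw [← hK2, ← h0]; ring
    have hu : u = 0 := by nlinarith [sq_nonneg u, sq_nonneg v]
    have hv : v = 0 := by nlinarith [sq_nonneg u, sq_nonneg v]
    exact ⟨0, by simp [hu, ← h0], by simp [hv, ← h0]⟩
  · have hu1 : -1 ≤ u / K := by rw [le_div_iff₀ hpos]; nlinarith
    have hu2 : u / K ≤ 1 := by rw [div_le_iff₀ hpos]; nlinarith
    have hsin : Real.sin (Real.arccos (u/K)) = |v| / K := by
      rw [Real.sin_arccos]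
      have : 1 - (u/K)^2 = (v/K)^2 := by field_simp; nlinarith
      rw [this, Real.sqrt_sq_eq_abs, abs_div, abs_of_pos hpos]
    have hcos : Real.cos (Real.arccos (u/K)) = u / K := Real.cos_arccos hu1 hu2
    rcases le_or_gt 0 v with hv | hv
    · refine ⟨Real.arccos (u/K), ?_, ?_⟩
      · rw [hcos]; field_simp
      · rw [hsin, abs_of_nonneg hv]; field_simp
    · refine ⟨-Real.arccos (u/K), ?_, ?_⟩
      · rw [Real.cos_neg, hcos]; field_simp
      · rw [Real.sin_neg, hsin, abs_of_neg hv]; field_simp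

private lemma ev_aeval (y : ℝ) (c : MvPolynomial (Fin 1) ℝ) :
    Polynomial.eval y (MvPolynomial.aeval (fun _ : Fin 1 => (Polynomial.X : Polynomial ℝ)) c) =
      eval (fun _ => y) c := by
  induction c using MvPolynomial.induction_on with
  | C a => simp [MvPolynomial.algebraMap_eq]
  | add p r hp hr => simp [hp, hr]
  | mul_X p n hp => simp [hp]

lemma mv1_zero {c : MvPolynomial (Fin 1) ℝ} {l u : ℝ} (hlu : l < u)
    (h : ∀ y ∈ Set.Ioo l u, eval (fun _ => y) c = 0) : c = 0 := by
  set q : Polynomial ℝ := MvPolynomial.aeval (fun _ : Fin 1 => Polynomial.X) c with hq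
  have hq0 : q = 0 := by
    apply Polynomial.eq_zero_of_infinite_isRoot
    apply Set.Infinite.mono (s := Set.Ioo l u)
    · intro y hy
      simp only [Set.mem_setOf_eq, Polynomial.IsRoot.def]
      rw [hq, ev_aeval]; exact h y hy
    · exact Set.infinite_coe_iff.mp (Set.Ioo.infinite hlu)
  have hinv : (Polynomial.aeval (X (0 : Fin 1))).comp
      (MvPolynomial.aeval (fun _ : Fin 1 => (Polynomial.X : Polynomial ℝ))) =
      AlgHom.id ℝ (MvPolynomial (Fin 1) ℝ) := by
    apply MvPolynomial.algHom_ext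
    intro i
    fin_cases i <;> simp
  have : (Polynomial.aeval (X (0 : Fin 1))) q = c := by
    rw [hq]
    have := congrArg (fun f => f c) (congrArg DFunLike.coe hinv)
    simpa using this
  rw [hq0] at this
  simpa using this.symm


lemma circle_dvd (a b ρ : ℝ) (hρ : 0 < ρ) (P : MvPolynomial (Fin 2) ℝ)
    (h : ∀ θ : ℝ, eval (rpt a b ρ θ) P = 0) : gHole a b ρ ∣ P := by
  set φ := MvPolynomial.finSuccEquiv ℝ 1 with hφ
  set c₁ : MvPolynomial (Fin 1) ℝ := C (-(2*a)) with hc₁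
  set c₀ : MvPolynomial (Fin 1) ℝ := C (a^2) + (X 0 - C b)^2 - C ρ^2 with hc₀
  have h0 : φ (X (0 : Fin 2)) = Polynomial.X := MvPolynomial.finSuccEquiv_X_zero
  have h1 : φ (X (1 : Fin 2)) = Polynomial.C (X (0 : Fin 1)) := by
    have : ((0 : Fin 1)).succ = (1 : Fin 2) := rfl
    rw [← this]; exact MvPolynomial.finSuccEquiv_X_succ
  have hCl : ∀ r : ℝ, φ (C r) = Polynomial.C (C r) := by
    intro r; rw [hφ]; simp [MvPolynomial.finSuccEquiv_apply, MvPolynomial.eval₂Hom_C]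
  set p' : Polynomial (MvPolynomial (Fin 1) ℝ) := φ (gHole a b ρ) with hp'
  have hp'eq : p' = Polynomial.X ^ 2 + (Polynomial.C c₁ * Polynomial.X + Polynomial.C c₀) := by
    rw [hp']
    unfold gHole
    rw [map_sub, map_add, map_pow, map_pow, map_pow, map_sub, map_sub, h0, h1, hCl, hCl, hCl]
    rw [hc₁, hc₀]
    simp only [map_add, map_sub, map_pow, map_mul, map_neg, map_ofNat, map_one]
    ring
  have hmonic : p'.Monic := by
    rw [hp'eq]
    apply Polynomial.monic_X_pow_add
    exact lt_of_le_of_lt Polynomial.degree_linear_le (by exact_mod_cast Nat.one_lt_two)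
  have hdeg2 : p'.degree = 2 := by
    rw [hp'eq]
    rw [Polynomial.degree_add_eq_left_of_degree_lt]
    · exact Polynomial.degree_X_pow 2
    · rw [Polynomial.degree_X_pow]
      exact lt_of_le_of_lt Polynomial.degree_linear_le (by exact_mod_cast Nat.one_lt_two)
  set rem := (φ P) %ₘ p' with hrem
  have hdlt : rem.degree < 2 := by
    rw [← hdeg2]; exact Polynomial.degree_modByMonic_lt (φ P) hmonic
  have hdle : rem.degree ≤ 1 := by
    have h' := hdlt
    revert h'
    generalize rem.degree = d
    intro h'
    cases d with
    | bot => exact bot_le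
    | coe n =>
      have hn2 : (n : WithBot ℕ) < ((2:ℕ) : WithBot ℕ) := h'
      have : n < 2 := WithBot.coe_lt_coe.mp hn2
      exact WithBot.coe_le_coe.mpr (Nat.lt_succ_iff.mp this)
  have hremeq : rem = Polynomial.C (rem.coeff 1) * Polynomial.X + Polynomial.C (rem.coeff 0) :=
    Polynomial.eq_X_add_C_of_degree_le_one hdle
  have hdiv := Polynomial.modByMonic_add_div (φ P) p'
  -- evaluate
  have heval : ∀ θ : ℝ,
      eval (fun _ => b + ρ * Real.sin θ) (rem.coeff 1) * (a + ρ * Real.cos θ) +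
      eval (fun _ => b + ρ * Real.sin θ) (rem.coeff 0) = 0 := by
    intro θ
    have hP := h θ
    have hcons : rpt a b ρ θ =
        Fin.cons (a + ρ * Real.cos θ) (fun _ : Fin 1 => b + ρ * Real.sin θ) := rfl
    rw [hcons, MvPolynomial.eval_eq_eval_mv_eval'] at hP
    rw [← hφ, ← hdiv] at hP
    have hcirc : Polynomial.eval (a + ρ * Real.cos θ)
        (Polynomial.map (eval (fun _ : Fin 1 => b + ρ * Real.sin θ)) p') = 0 := by
      rw [hp']
      rw [← MvPolynomial.eval_eq_eval_mv_eval']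
      have : (Fin.cons (a + ρ * Real.cos θ) (fun _ : Fin 1 => b + ρ * Real.sin θ) : Fin 2 → ℝ) =
        rpt a b ρ θ := rfl
      rw [this]
      unfold gHole rpt
      simp [Fin.cons_zero, Fin.cons_one]
      ring_nf
      nlinarith [Real.sin_sq_add_cos_sq θ]
    rw [Polynomial.map_add, Polynomial.map_mul, Polynomial.eval_add, Polynomial.eval_mul] at hP
    rw [hcirc, zero_mul, add_zero, ← hrem, hremeq] at hP
    rw [Polynomial.map_add, Polynomial.map_mul, Polynomial.map_C, Polynomial.map_X,
      Polynomial.map_C, Polynomial.eval_add, Polynomial.eval_mul, Polynomial.eval_C,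
      Polynomial.eval_X, Polynomial.eval_C] at hP
    linarith [hP]
  have hkey : ∀ y ∈ Set.Ioo (b - ρ) (b + ρ),
      eval (fun _ => y) (rem.coeff 1) = 0 ∧ eval (fun _ => y) (rem.coeff 0) = 0 := by
    intro y hy
    set s : ℝ := (y - b)/ρ with hs
    have hs1 : s^2 < 1 := by
      rw [hs]
      rw [div_pow, div_lt_one (by positivity)]
      have h1 := hy.1; have h2 := hy.2
      nlinarith
    have hsle : -1 ≤ s := by nlinarith
    have hsle2 : s ≤ 1 := by nlinarith
    set t := Real.arcsin s with ht
    have hsint : Real.sin t = s := Real.sin_arcsin hsle hsle2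
    have hcost : Real.cos t = Real.sqrt (1 - s^2) := Real.cos_arcsin s
    have hcpos : 0 < Real.cos t := by rw [hcost]; apply Real.sqrt_pos.mpr; linarith
    have hyt : b + ρ * Real.sin t = y := by rw [hsint, hs]; field_simp; ring
    have e1 := heval t
    have e2 := heval (Real.pi - t)
    rw [Real.sin_pi_sub, Real.cos_pi_sub, hyt] at e2
    rw [hyt] at e1
    have hc1 : eval (fun _ => y) (rem.coeff 1) = 0 := by
      have hsub : eval (fun _ => y) (rem.coeff 1) * (2 * (ρ * Real.cos t)) = 0 := by
        linarith [e1, e2]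
      rcases mul_eq_zero.mp hsub with h' | h'
      · exact h'
      · exfalso; nlinarith
    refine ⟨hc1, ?_⟩
    rw [hc1, zero_mul, zero_add] at e1
    exact e1
  -- conclude rem = 0
  have hcoeff1 : rem.coeff 1 = 0 := mv1_zero (by linarith : b - ρ < b + ρ) (fun y hy => (hkey y hy).1)
  have hcoeff0 : rem.coeff 0 = 0 := mv1_zero (by linarith : b - ρ < b + ρ) (fun y hy => (hkey y hy).2)
  have hrem0 : rem = 0 := by rw [hremeq, hcoeff1, hcoeff0]; simp
  have hfac : φ P = p' * (φ P /ₘ p') := by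
    have h2 : rem + p' * (φ P /ₘ p') = φ P := hdiv
    rw [hrem0, zero_add] at h2
    exact h2.symm
  refine ⟨φ.symm (φ P /ₘ p'), ?_⟩
  calc P = φ.symm (p' * (φ P /ₘ p')) := by rw [← hfac, AlgEquiv.symm_apply_apply]
    _ = gHole a b ρ * φ.symm (φ P /ₘ p') := by rw [map_mul, hp', AlgEquiv.symm_apply_apply]


lemma eval_gHole (v : Fin 2 → ℝ) (u₁ u₂ w : ℝ) :
    eval v (gHole u₁ u₂ w) = (v 0 - u₁)^2 + (v 1 - u₂)^2 - w^2 := by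
  simp [gHole]

lemma rpt_zero (a b ρ θ : ℝ) : rpt a b ρ θ 0 = a + ρ * Real.cos θ := rfl
lemma rpt_one (a b ρ θ : ℝ) : rpt a b ρ θ 1 = b + ρ * Real.sin θ := rfl

lemma eval_gHole_rpt (a b ρ θ u₁ u₂ w : ℝ) :
    eval (rpt a b ρ θ) (gHole u₁ u₂ w) =
      (a + ρ * Real.cos θ - u₁)^2 + (b + ρ * Real.sin θ - u₂)^2 - w^2 := by
  rw [eval_gHole, rpt_zero, rpt_one]

lemma eval_gHole_self (a b ρ θ : ℝ) :
    eval (rpt a b ρ θ) (gHole a b ρ) = 0 := by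
  rw [eval_gHole_rpt]
  have := Real.sin_sq_add_cos_sq θ
  ring_nf
  nlinarith [this]

-- continuity of polynomial evaluation on EuclideanSpace
lemma contE (P : MvPolynomial (Fin 2) ℝ) :
    Continuous fun x : EuclideanSpace ℝ (Fin 2) => eval (fun j => x j) P := by
  induction P using MvPolynomial.induction_on with
  | C c => simpa using continuous_const
  | add p q hp hq =>
      simp only [map_add]
      exact hp.add hq
  | mul_X p n hp =>
      simp only [map_mul, eval_X]
      refine hp.mul ?_
      exact (continuous_apply n).comp (PiLp.continuous_ofLp (p := 2) (β := fun _ : Fin 2 => ℝ))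

noncomputable def ptE (a b ρ : ℝ) (θ : ℝ) : EuclideanSpace ℝ (Fin 2) :=
  (WithLp.equiv 2 (Fin 2 → ℝ)).symm (rpt a b ρ θ)

lemma ptE_coords (a b ρ θ : ℝ) : (fun j => ptE a b ρ θ j) = rpt a b ρ θ := rfl

lemma ptE_continuous (a b ρ : ℝ) : Continuous (ptE a b ρ) := by
  apply (PiLp.continuous_toLp (p := 2) (β := fun _ : Fin 2 => ℝ)).comp
  apply continuous_pi
  intro idx
  refine Fin.cases ?_ (fun iv => ?_) idx
  · exact (continuous_const.add (continuous_const.mul Real.continuous_cos) :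
      Continuous fun θ : ℝ => a + ρ * Real.cos θ)
  · exact (continuous_const.add (continuous_const.mul Real.continuous_sin) :
      Continuous fun θ : ℝ => b + ρ * Real.sin θ)

lemma arc_interval (a b ρ : ℝ) (hρ : 0 < ρ) (Gi : MvPolynomial (Fin 2) ℝ) (d : ℝ) (hd : d ≠ 0)
    (hGi : Gi = C d * gHole a b ρ)
    (S : Set (EuclideanSpace ℝ (Fin 2))) (hScl : IsClosed S)
    (harc : ∃ x ∈ {x : EuclideanSpace ℝ (Fin 2) | eval (fun j' => x j') Gi = 0},
      ∃ ε > (0:ℝ),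
        Metric.ball x ε ∩ {x : EuclideanSpace ℝ (Fin 2) | eval (fun j' => x j') Gi = 0} ⊆
          frontier S) :
    ∃ t₁ t₂ : ℝ, t₁ < t₂ ∧ ∀ θ ∈ Set.Ioo t₁ t₂, ptE a b ρ θ ∈ S := by
  obtain ⟨x₀, hx₀, ε, hε, hsub⟩ := harc
  simp only [Set.mem_setOf_eq] at hx₀
  rw [hGi] at hx₀
  rw [map_mul, eval_C] at hx₀
  have hx₀' : eval (fun j' => x₀ j') (gHole a b ρ) = 0 := by
    rcases mul_eq_zero.mp hx₀ with h | h
    · exact absurd h hd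
    · exact h
  rw [eval_gHole] at hx₀'
  set u := x₀ 0 - a with hu
  set v := x₀ 1 - b with hv
  have huv : u^2 + v^2 = ρ^2 := by linarith
  obtain ⟨θ₀, hθu, hθv⟩ := polar u v
  rw [huv, Real.sqrt_sq hρ.le] at hθu hθv
  have hx₀eq : ptE a b ρ θ₀ = x₀ := by
    have : rpt a b ρ θ₀ = fun j => x₀ j := by
      funext idx
      refine Fin.cases ?_ (fun iv => ?_) idx
      · rw [rpt_zero, ← hθu]; rw [hu]; ring
      · have h1 : iv.succ = (1 : Fin 2) := by fin_cases iv; rfl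
        rw [h1, rpt_one, ← hθv]; rw [hv]; ring
    unfold ptE
    rw [this]
    rfl
  have hcont : Continuous fun θ => dist (ptE a b ρ θ) x₀ :=
    (ptE_continuous a b ρ).dist continuous_const
  have hopen : IsOpen {θ : ℝ | dist (ptE a b ρ θ) x₀ < ε} := isOpen_lt hcont continuous_const
  have hθ₀mem : θ₀ ∈ {θ : ℝ | dist (ptE a b ρ θ) x₀ < ε} := by
    simp only [Set.mem_setOf_eq, hx₀eq, dist_self]
    exact hε
  obtain ⟨δ, hδ, hball⟩ := Metric.isOpen_iff.mp hopen θ₀ hθ₀mem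
  refine ⟨θ₀ - δ, θ₀ + δ, by linarith, ?_⟩
  intro θ hθ
  have hball' : θ ∈ Metric.ball θ₀ δ := by
    rw [Real.ball_eq_Ioo]; exact hθ
  have hdist : dist (ptE a b ρ θ) x₀ < ε := hball hball'
  have hmem : ptE a b ρ θ ∈ Metric.ball x₀ ε ∩
      {x : EuclideanSpace ℝ (Fin 2) | eval (fun j' => x j') Gi = 0} := by
    constructor
    · exact Metric.mem_ball.mpr hdist
    · simp only [Set.mem_setOf_eq]
      rw [hGi, map_mul, eval_C, ptE_coords, eval_gHole_self, mul_zero]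
  exact hScl.frontier_subset (hsub hmem)


lemma isClosed_S {m : ℕ} (g : Fin (m+1) → MvPolynomial (Fin 2) ℝ)
    (S : Set (EuclideanSpace ℝ (Fin 2)))
    (hS : S = {x | ∀ k, 0 ≤ eval (fun j => x j) (g k)}) : IsClosed S := by
  have : S = ⋂ k, (fun x : EuclideanSpace ℝ (Fin 2) => eval (fun j => x j) (g k)) ⁻¹'
      Set.Ici 0 := by
    rw [hS]; ext x; simp [Set.mem_iInter]
  rw [this]
  exact isClosed_iInter fun k => (isClosed_Ici).preimage (contE _)

lemma arc_div {m N : ℕ} (g : Fin (m+1) → MvPolynomial (Fin 2) ℝ)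
    (S : Set (EuclideanSpace ℝ (Fin 2)))
    (hS : S = {x | ∀ k, 0 ≤ eval (fun j => x j) (g k)})
    (a b ρ : ℝ) (hρ : 0 < ρ) (i : Fin (m+1)) (d : ℝ) (hd : d ≠ 0)
    (hgi : g i = C d * gHole a b ρ)
    (harc : ∃ x ∈ {x : EuclideanSpace ℝ (Fin 2) | eval (fun j' => x j') (g i) = 0},
      ∃ ε > (0:ℝ),
        Metric.ball x ε ∩ {x : EuclideanSpace ℝ (Fin 2) | eval (fun j' => x j') (g i) = 0} ⊆
          frontier S)
    (GG : MvPolynomial (Fin 2) ℝ)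
    (hGG0 : ∀ θ : ℝ, eval (rpt a b ρ θ) GG = 0)
    (r : Fin (N+1) → MvPolynomial (Fin 2) ℝ)
    (rr : Fin (m+1) → Fin (N+1) → MvPolynomial (Fin 2) ℝ)
    (hrep : GG = ∑ l, r l ^ 2 + ∑ k, (∑ l, rr k l ^ 2) * g k) :
    (∀ l, gHole a b ρ ∣ r l) ∧
    (∀ k, ¬(∀ θ : ℝ, eval (rpt a b ρ θ) (g k) = 0) → ∀ l, gHole a b ρ ∣ rr k l) := by
  have hScl := isClosed_S g S hS
  obtain ⟨t₁, t₂, hlt, hmem⟩ := arc_interval a b ρ hρ (g i) d hd hgi S hScl harc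
  -- pointwise vanishing on the interval
  have hpt : ∀ θ ∈ Set.Ioo t₁ t₂,
      (∀ l, eval (rpt a b ρ θ) (r l) = 0) ∧
      (∀ k, (∑ l, (eval (rpt a b ρ θ) (rr k l))^2) * eval (rpt a b ρ θ) (g k) = 0) := by
    intro θ hθ
    have hx := hmem θ hθ
    have hnn : ∀ k, 0 ≤ eval (rpt a b ρ θ) (g k) := by
      rw [hS] at hx
      intro k
      have := hx k
      rwa [ptE_coords] at this
    have he := congrArg (eval (rpt a b ρ θ)) hrep
    rw [hGG0 θ] at he
    simp only [map_add, map_sum, map_mul, map_pow] at he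
    set S1 := ∑ l, (eval (rpt a b ρ θ) (r l))^2 with hS1
    set S2 := ∑ k, (∑ l, (eval (rpt a b ρ θ) (rr k l))^2) * eval (rpt a b ρ θ) (g k) with hS2
    have hS1nn : 0 ≤ S1 := Finset.sum_nonneg fun l _ => sq_nonneg _
    have hS2nn : 0 ≤ S2 :=
      Finset.sum_nonneg fun k _ =>
        mul_nonneg (Finset.sum_nonneg fun l _ => sq_nonneg _) (hnn k)
    have hsum : S1 + S2 = 0 := he.symm
    have hS10 : S1 = 0 := by linarith
    have hS20 : S2 = 0 := by linarith
    constructor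
    · intro l
      have := (Finset.sum_eq_zero_iff_of_nonneg (fun l _ => sq_nonneg _)).mp hS10 l
        (Finset.mem_univ l)
      exact pow_eq_zero_iff (n := 2) (by norm_num) |>.mp this
    · intro k
      exact (Finset.sum_eq_zero_iff_of_nonneg (fun k _ =>
        mul_nonneg (Finset.sum_nonneg fun l _ => sq_nonneg _) (hnn k))).mp hS20 k
        (Finset.mem_univ k)
  constructor
  · intro l
    apply circle_dvd a b ρ hρ
    apply cev_real_zero a b ρ (r l) hlt
    intro θ hθ
    exact (hpt θ hθ).1 l
  · intro k hk l
    -- the product polynomial vanishes on the whole circle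
    have hprodI : ∀ θ ∈ Set.Ioo t₁ t₂,
        eval (rpt a b ρ θ) ((∑ l', rr k l' ^ 2) * g k) = 0 := by
      intro θ hθ
      have := (hpt θ hθ).2 k
      simpa [map_mul, map_sum, map_pow] using this
    have hprod : ∀ θ : ℝ, eval (rpt a b ρ θ) ((∑ l', rr k l' ^ 2) * g k) = 0 :=
      cev_real_zero a b ρ _ hlt hprodI
    push_neg at hk
    obtain ⟨θ₁, hθ₁⟩ := hk
    have hcont : Continuous fun θ : ℝ => eval (rpt a b ρ θ) (g k) := by
      exact ((contE (g k)).comp (ptE_continuous a b ρ)).congr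
        (fun θ => congrArg (fun v => eval v (g k)) (ptE_coords a b ρ θ))
    have hopen : IsOpen {θ : ℝ | eval (rpt a b ρ θ) (g k) ≠ 0} := by
      have : {θ : ℝ | eval (rpt a b ρ θ) (g k) ≠ 0} =
          (fun θ : ℝ => eval (rpt a b ρ θ) (g k)) ⁻¹' ({0}ᶜ) := rfl
      rw [this]
      exact (isOpen_compl_singleton).preimage hcont
    obtain ⟨δ, hδ, hball⟩ := Metric.isOpen_iff.mp hopen θ₁ hθ₁
    apply circle_dvd a b ρ hρ
    apply cev_real_zero a b ρ (rr k l) (by linarith : θ₁ - δ < θ₁ + δ)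
    intro θ hθ
    have hne : eval (rpt a b ρ θ) (g k) ≠ 0 := by
      apply hball
      rw [Real.ball_eq_Ioo]
      exact hθ
    have hzero : eval (rpt a b ρ θ) (∑ l', rr k l' ^ 2) = 0 := by
      have := hprod θ
      rw [map_mul] at this
      rcases mul_eq_zero.mp this with h | h
      · exact h
      · exact absurd h hne
    rw [map_sum] at hzero
    have : ∀ l' ∈ Finset.univ, (0:ℝ) ≤ eval (rpt a b ρ θ) (rr k l' ^ 2) := by
      intro l' _
      rw [map_pow]
      exact sq_nonneg _
    have := (Finset.sum_eq_zero_iff_of_nonneg this).mp hzero l (Finset.mem_univ l)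
    rw [map_pow] at this
    exact pow_eq_zero_iff (n := 2) (by norm_num) |>.mp this


lemma gDisk_eq : gDisk = C (-1) * gHole 0 0 1 := by
  have h1 : (C (-1) : MvPolynomial (Fin 2) ℝ) = -1 := by simp
  have h2 : (C (0:ℝ) : MvPolynomial (Fin 2) ℝ) = 0 := by simp
  have h3 : (C (1:ℝ) : MvPolynomial (Fin 2) ℝ) = 1 := by simp
  unfold gDisk gHole
  rw [h1, h2, h3]
  ring

lemma classify_hole (a b ρ u v w : ℝ) (hρ : 0 < ρ) (hw : 0 < w)
    (h : ∀ θ : ℝ, eval (rpt a b ρ θ) (gHole u v w) = 0) :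
    (u, v) = (a, b) ∧ gHole u v w = gHole a b ρ := by
  have h0 := h 0
  have hpi := h Real.pi
  have h2 := h (Real.pi / 2)
  have h3 := h (-(Real.pi / 2))
  rw [eval_gHole_rpt] at h0 hpi h2 h3
  rw [Real.cos_zero, Real.sin_zero] at h0
  rw [Real.cos_pi, Real.sin_pi] at hpi
  rw [Real.cos_pi_div_two, Real.sin_pi_div_two] at h2
  rw [Real.cos_neg, Real.sin_neg, Real.cos_pi_div_two, Real.sin_pi_div_two] at h3
  have hu : u = a := by nlinarith
  have hv : v = b := by nlinarith
  have hw2 : w^2 = ρ^2 := by nlinarith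
  have hwρ : w = ρ := by nlinarith
  subst hu hv hwρ
  exact ⟨rfl, rfl⟩

lemma classify_disk (a b ρ : ℝ) (hρ : 0 < ρ)
    (h : ∀ θ : ℝ, eval (rpt a b ρ θ) gDisk = 0) :
    ((0:ℝ), (0:ℝ)) = (a, b) ∧ gDisk = C (-1) * gHole a b ρ := by
  have h' : ∀ θ : ℝ, eval (rpt a b ρ θ) (gHole 0 0 1) = 0 := by
    intro θ
    have := h θ
    rw [gDisk_eq, map_mul, eval_C] at this
    have hne : (-1 : ℝ) ≠ 0 := by norm_num
    rcases mul_eq_zero.mp this with hl | hr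
    · exact absurd hl hne
    · exact hr
  obtain ⟨hc, heq⟩ := classify_hole a b ρ 0 0 1 hρ one_pos h'
  exact ⟨hc, by rw [gDisk_eq, heq]⟩


lemma cpt_zero (a b ρ : ℝ) (z : ℂ) : cpt a b ρ z 0 = (a : ℂ) + (ρ : ℂ) * Complex.cos z := rfl
lemma cpt_one (a b ρ : ℝ) (z : ℂ) : cpt a b ρ z 1 = (b : ℂ) + (ρ : ℂ) * Complex.sin z := rfl

lemma cev_ringhom (a b ρ : ℝ) (z : ℂ) (P Q : MvPolynomial (Fin 2) ℝ) :
    cev a b ρ (P * Q) z = cev a b ρ P z * cev a b ρ Q z := by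
  simp [cev, eval₂_mul]

lemma cev_add (a b ρ : ℝ) (z : ℂ) (P Q : MvPolynomial (Fin 2) ℝ) :
    cev a b ρ (P + Q) z = cev a b ρ P z + cev a b ρ Q z := by
  simp [cev, eval₂_add]

lemma cev_C (a b ρ : ℝ) (z : ℂ) (c : ℝ) : cev a b ρ (C c) z = (c : ℂ) := by
  simp [cev]

lemma cev_pow (a b ρ : ℝ) (z : ℂ) (P : MvPolynomial (Fin 2) ℝ) (n : ℕ) :
    cev a b ρ (P ^ n) z = (cev a b ρ P z) ^ n := by
  simp [cev, eval₂_pow]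

lemma cev_gHole (a b ρ u v w : ℝ) (z : ℂ) :
    cev a b ρ (gHole u v w) z =
      ((a : ℂ) + ρ * Complex.cos z - u)^2 + ((b : ℂ) + ρ * Complex.sin z - v)^2 - (w:ℂ)^2 := by
  unfold cev gHole
  rw [eval₂_sub, eval₂_add, eval₂_pow, eval₂_pow, eval₂_pow, eval₂_sub, eval₂_sub,
    eval₂_X, eval₂_X, eval₂_C, eval₂_C, eval₂_C]
  rw [cpt_zero, cpt_one]
  rfl

lemma cev_gHole_self (a b ρ : ℝ) (z : ℂ) : cev a b ρ (gHole a b ρ) z = 0 := by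
  rw [cev_gHole]
  linear_combination (ρ:ℂ)^2 * (Complex.sin_sq_add_cos_sq z)

lemma endgame (ai bi ρi aj bj ρj : ℝ) (hρi : 0 < ρi) (hρj : 0 < ρj)
    (hctr : ((ai, bi) : ℝ × ℝ) ≠ (aj, bj))
    (c : ℝ) (hc : c ≠ 0) (A τ : MvPolynomial (Fin 2) ℝ)
    (hiden : C c * gHole aj bj ρj = gHole ai bi ρi * A + gHole aj bj ρj ^ 2 * τ) :
    False := by
  set F := cev ai bi ρi (gHole aj bj ρj) with hF
  set T := cev ai bi ρi τ with hT
  have hFz : ∀ z : ℂ, (c : ℂ) * F z = F z ^ 2 * T z := by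
    intro z
    have := congrArg (fun P => cev ai bi ρi P z) hiden
    simpa [cev_ringhom, cev_add, cev_C, cev_pow, cev_gHole_self] using this
  set α := ai - aj with hα
  set β := bi - bj with hβ
  have hαβ : α ≠ 0 ∨ β ≠ 0 := by
    by_contra hcon
    push_neg at hcon
    apply hctr
    have h1 : ai = aj := by have := hcon.1; rw [hα] at this; linarith
    have h2 : bi = bj := by have := hcon.2; rw [hβ] at this; linarith
    rw [h1, h2]
  set C0 : ℝ := α^2 + β^2 + ρi^2 - ρj^2 with hC0
  have hFform : ∀ z : ℂ, F z = (C0 : ℂ) + 2*(ρi:ℂ)*((α:ℂ) * Complex.cos z + (β:ℂ) * Complex.sin z) := by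
    intro z
    rw [hF, cev_gHole]
    push_cast [hC0, hα, hβ]
    linear_combination (ρi:ℂ)^2 * (Complex.sin_sq_add_cos_sq z)
  set K := Real.sqrt (α^2 + β^2) with hK
  have hKpos : 0 < K := by
    rw [hK]
    apply Real.sqrt_pos.mpr
    rcases hαβ with h | h
    · positivity
    · positivity
  obtain ⟨ψ, hψ1, hψ2⟩ := polar α β
  rw [← hK] at hψ1 hψ2
  have hcosid : ∀ z : ℂ, (α:ℂ) * Complex.cos z + (β:ℂ) * Complex.sin z =
      (K:ℂ) * Complex.cos (z - (ψ:ℂ)) := by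
    intro z
    rw [Complex.cos_sub]
    have h1 : (α : ℂ) = (K:ℂ) * Complex.cos (ψ:ℂ) := by
      rw [hψ1]; push_cast [Complex.ofReal_cos]; try ring
    have h2 : (β : ℂ) = (K:ℂ) * Complex.sin (ψ:ℂ) := by
      rw [hψ2]; push_cast [Complex.ofReal_sin]; try ring
    rw [h1, h2]; ring
  have hFform2 : ∀ z : ℂ, F z = (C0:ℂ) + 2*(ρi:ℂ)*(K:ℂ) * Complex.cos (z - (ψ:ℂ)) := by
    intro z; rw [hFform, hcosid]; ring
  have h2ρK : (2*(ρi:ℂ)*(K:ℂ)) ≠ 0 := by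
    push_cast
    intro hcon
    rw [mul_eq_zero, mul_eq_zero] at hcon
    rcases hcon with (h | h) | h
    · norm_num at h
    · exact absurd (by exact_mod_cast h) (ne_of_gt hρi)
    · exact absurd (by exact_mod_cast h) (ne_of_gt hKpos)
  obtain ⟨w₀, hw₀⟩ := Complex.cos_surjective (-(C0:ℂ)/(2*(ρi:ℂ)*(K:ℂ)))
  set z₀ : ℂ := (ψ:ℂ) + w₀ with hz₀
  have hFz₀ : F z₀ = 0 := by
    rw [hFform2]
    have : z₀ - (ψ:ℂ) = w₀ := by rw [hz₀]; ring
    rw [this, hw₀]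
    rw [mul_div_cancel₀ _ h2ρK]
    ring
  -- F is not identically zero
  have hFnot : ¬ (∀ z : ℂ, F z = 0) := by
    intro hall
    have e1 := hall ((ψ:ℂ))
    have e2 := hall ((ψ:ℂ) + Real.pi)
    rw [hFform2] at e1 e2
    have h1 : (ψ:ℂ) - (ψ:ℂ) = 0 := by ring
    have h2 : (ψ:ℂ) + (Real.pi:ℂ) - (ψ:ℂ) = (Real.pi:ℂ) := by ring
    rw [h1, Complex.cos_zero] at e1
    rw [h2] at e2
    have hπ : Complex.cos ((Real.pi:ℂ)) = -1 := by
      rw [← Complex.ofReal_cos, Real.cos_pi]; norm_num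
    rw [hπ] at e2
    have : (4:ℂ)*(ρi:ℂ)*(K:ℂ) = 0 := by linear_combination e1 - e2
    apply h2ρK
    linear_combination this/2
  -- eventually nonzero near z₀
  have hana : AnalyticOnNhd ℂ F Set.univ :=
    (cev_differentiable ai bi ρi (gHole aj bj ρj)).differentiableOn.analyticOnNhd isOpen_univ
  have hEvent : ∀ᶠ z in nhdsWithin z₀ {z₀}ᶜ, F z ≠ 0 := by
    by_contra hcon
    rw [Filter.not_eventually] at hcon
    simp only [not_not] at hcon
    have := hana.eqOn_zero_of_preconnected_of_frequently_eq_zero isPreconnected_univ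
      (Set.mem_univ z₀) hcon
    exact hFnot fun z => this (Set.mem_univ z)
  have hconst : ∀ᶠ z in nhdsWithin z₀ {z₀}ᶜ, F z * T z = (c:ℂ) := by
    filter_upwards [hEvent] with z hz
    have := hFz z
    have h2 : F z * (F z * T z) = F z * (c:ℂ) := by ring_nf; linear_combination -this
    have := mul_left_cancel₀ hz h2
    exact this
  have htends : Filter.Tendsto (fun z => F z * T z) (nhdsWithin z₀ {z₀}ᶜ) (nhds (F z₀ * T z₀)) :=
    (((cev_continuous ai bi ρi (gHole aj bj ρj)).mul
      (cev_continuous ai bi ρi τ)).continuousAt).tendsto.mono_left nhdsWithin_le_nhds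
  have htends2 : Filter.Tendsto (fun z => F z * T z) (nhdsWithin z₀ {z₀}ᶜ) (nhds (c:ℂ)) := by
    apply Filter.Tendsto.congr' _ (tendsto_const_nhds)
    exact (hconst.mono fun z hz => hz.symm)
  have : F z₀ * T z₀ = (c:ℂ) := tendsto_nhds_unique htends htends2
  rw [hFz₀, zero_mul] at this
  exact hc (by exact_mod_cast this.symm)

theorem stmt17 (m : ℕ) (cen : Fin m → ℝ × ℝ) (R : Fin m → ℝ) (hR : ∀ i, 0 < R i)
    (g : Fin (m + 1) → MvPolynomial (Fin 2) ℝ)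
    (hg : g = Fin.cons gDisk fun i => gHole (cen i).1 (cen i).2 (R i))
    (ctr : Fin (m + 1) → ℝ × ℝ)
    (hctr : ctr = Fin.cons (0, 0) cen)
    (S : Set (EuclideanSpace ℝ (Fin 2)))
    (hS : S = {x | ∀ k, 0 ≤ eval (fun j => x j) (g k)})
    (i j : Fin (m + 1)) (hij : ctr i ≠ ctr j)
    (harci : ∃ x ∈ {x : EuclideanSpace ℝ (Fin 2) | eval (fun j' => x j') (g i) = 0},
      ∃ ε > (0 : ℝ),
        Metric.ball x ε ∩ {x : EuclideanSpace ℝ (Fin 2) | eval (fun j' => x j') (g i) = 0} ⊆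
          frontier S)
    (harcj : ∃ x ∈ {x : EuclideanSpace ℝ (Fin 2) | eval (fun j' => x j') (g j) = 0},
      ∃ ε > (0 : ℝ),
        Metric.ball x ε ∩ {x : EuclideanSpace ℝ (Fin 2) | eval (fun j' => x j') (g j) = 0} ⊆
          frontier S) :
    ¬ ∃ (N : ℕ) (r : Fin (N + 1) → MvPolynomial (Fin 2) ℝ)
        (rr : Fin (m + 1) → Fin (N + 1) → MvPolynomial (Fin 2) ℝ),
        g i * g j = ∑ l, r l ^ 2 + ∑ k, (∑ l, rr k l ^ 2) * g k := by
  rintro ⟨N, r, rr, hrep⟩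
  classical
  set ρf : Fin (m+1) → ℝ := Fin.cons 1 R with hρf
  have hρpos : ∀ k, 0 < ρf k := by
    intro k
    refine Fin.cases ?_ (fun iv => ?_) k
    · rw [hρf]; simp
    · rw [hρf]; simpa using hR iv
  -- each gₖ is a nonzero multiple of its circle polynomial
  have hform : ∀ k, ∃ d : ℝ, d ≠ 0 ∧ g k = C d * gHole (ctr k).1 (ctr k).2 (ρf k) := by
    intro k
    refine Fin.cases ?_ (fun iv => ?_) k
    · refine ⟨-1, by norm_num, ?_⟩
      rw [hg, hctr, hρf]
      simp only [Fin.cons_zero]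
      exact gDisk_eq
    · refine ⟨1, one_ne_zero, ?_⟩
      rw [hg, hctr, hρf]
      simp only [Fin.cons_succ]
      rw [map_one, one_mul]
  obtain ⟨di, hdi, hgi⟩ := hform i
  obtain ⟨dj, hdj, hgj⟩ := hform j
  set ai := (ctr i).1
  set bi := (ctr i).2
  set ρi := ρf i
  set aj := (ctr j).1
  set bj := (ctr j).2
  set ρj := ρf j
  set P := gHole ai bi ρi with hP
  set Q := gHole aj bj ρj with hQ
  -- the product vanishes on both circles
  have hGG0i : ∀ θ : ℝ, eval (rpt ai bi ρi θ) (g i * g j) = 0 := by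
    intro θ
    rw [map_mul, hgi, map_mul, eval_C, hP, eval_gHole_self, mul_zero, zero_mul]
  have hGG0j : ∀ θ : ℝ, eval (rpt aj bj ρj θ) (g i * g j) = 0 := by
    intro θ
    rw [map_mul, hgj, map_mul, eval_C, hQ, eval_gHole_self, mul_zero, mul_zero]
  obtain ⟨hdvd_ri, hdvd_rri⟩ := arc_div g S hS ai bi ρi (hρpos i) i di hdi hgi harci
    (g i * g j) hGG0i r rr hrep
  obtain ⟨hdvd_rj, hdvd_rrj⟩ := arc_div g S hS aj bj ρj (hρpos j) j dj hdj hgj harcj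
    (g i * g j) hGG0j r rr hrep
  set Ei : Fin (m+1) → Prop := fun k => ∀ θ : ℝ, eval (rpt ai bi ρi θ) (g k) = 0 with hEi
  set Ej : Fin (m+1) → Prop := fun k => ∀ θ : ℝ, eval (rpt aj bj ρj θ) (g k) = 0 with hEj
  -- classification of the members of Ei / Ej
  have hclass : ∀ (a b ρ : ℝ), 0 < ρ → ∀ k, (∀ θ : ℝ, eval (rpt a b ρ θ) (g k) = 0) →
      ctr k = (a, b) ∧ ∃ d : ℝ, d ≠ 0 ∧ g k = C d * gHole a b ρ := by
    intro a b ρ hρ k hk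
    revert hk
    refine Fin.cases ?_ (fun iv => ?_) k
    · intro hk
      rw [hg] at hk
      simp only [Fin.cons_zero] at hk
      obtain ⟨hc, heq⟩ := classify_disk a b ρ hρ hk
      constructor
      · rw [hctr]; simp only [Fin.cons_zero]; exact hc
      · exact ⟨-1, by norm_num, by rw [hg]; simp only [Fin.cons_zero]; exact heq⟩
    · intro hk
      rw [hg] at hk
      simp only [Fin.cons_succ] at hk
      obtain ⟨hc, heq⟩ := classify_hole a b ρ (cen iv).1 (cen iv).2 (R iv) hρ (hR iv) hk
      constructor
      · rw [hctr]
        simp only [Fin.cons_succ]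
        rw [← hc]
      · refine ⟨1, one_ne_zero, ?_⟩
        rw [hg]
        simp only [Fin.cons_succ]
        rw [map_one, one_mul, heq]
  have hctr_i : ctr i = (ai, bi) := rfl
  have hctr_j : ctr j = (aj, bj) := rfl
  have hdisj : ∀ k, Ei k → ¬ Ej k := by
    intro k h1 h2
    have e1 := (hclass ai bi ρi (hρpos i) k h1).1
    have e2 := (hclass aj bj ρj (hρpos j) k h2).1
    exact hij (by rw [hctr_i, hctr_j, ← e1, ← e2])
  -- choose the divisibility witnesses
  choose s hs using hdvd_ri
  have hu' : ∀ k l, ∃ u, Ei k → rr k l = Q * u := by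
    intro k l
    by_cases h : Ei k
    · obtain ⟨u, hu⟩ := hdvd_rrj k (hdisj k h) l
      exact ⟨u, fun _ => hu⟩
    · exact ⟨0, fun h' => absurd h' h⟩
  choose u hu using hu'
  have hw' : ∀ k l, ∃ w, ¬ Ei k → rr k l = P * w := by
    intro k l
    by_cases h : Ei k
    · exact ⟨0, fun h' => absurd h h'⟩
    · obtain ⟨w, hww⟩ := hdvd_rri k h l
      exact ⟨w, fun _ => hww⟩
  choose w hw using hw'
  have hdk' : ∀ k, ∃ dkk : ℝ, Ei k → g k = C dkk * P := by
    intro k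
    by_cases h : Ei k
    · obtain ⟨d, _, hd2⟩ := (hclass ai bi ρi (hρpos i) k h).2
      exact ⟨d, fun _ => hd2⟩
    · exact ⟨0, fun h' => absurd h' h⟩
  choose dk hdk using hdk'
  -- rewrite the representation
  set A₀ : MvPolynomial (Fin 2) ℝ := ∑ l, s l ^ 2 with hA₀
  set τ : MvPolynomial (Fin 2) ℝ :=
    ∑ k ∈ Finset.univ.filter Ei, C (dk k) * ∑ l, u k l ^ 2 with hτ
  set B : MvPolynomial (Fin 2) ℝ :=
    ∑ k ∈ Finset.univ.filter (fun k => ¬ Ei k), (∑ l, w k l ^ 2) * g k with hB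
  have h1 : ∑ l, r l ^ 2 = P ^ 2 * A₀ := by
    rw [hA₀, Finset.mul_sum]
    apply Finset.sum_congr rfl
    intro l _
    rw [hs l]; ring
  have h2 : ∑ k ∈ Finset.univ.filter Ei, (∑ l, rr k l ^ 2) * g k = P * (Q ^ 2 * τ) := by
    rw [hτ, Finset.mul_sum, Finset.mul_sum]
    apply Finset.sum_congr rfl
    intro k hk
    have hEk : Ei k := (Finset.mem_filter.mp hk).2
    rw [hdk k hEk]
    have hsum : (∑ l, rr k l ^ 2) = Q ^ 2 * ∑ l, u k l ^ 2 := by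
      rw [Finset.mul_sum]
      apply Finset.sum_congr rfl
      intro l _
      rw [hu k l hEk]; ring
    rw [hsum]; ring
  have h3 : ∑ k ∈ Finset.univ.filter (fun k => ¬ Ei k), (∑ l, rr k l ^ 2) * g k
      = P ^ 2 * B := by
    rw [hB, Finset.mul_sum]
    apply Finset.sum_congr rfl
    intro k hk
    have hEk : ¬ Ei k := (Finset.mem_filter.mp hk).2
    have hsum : (∑ l, rr k l ^ 2) = P ^ 2 * ∑ l, w k l ^ 2 := by
      rw [Finset.mul_sum]
      apply Finset.sum_congr rfl
      intro l _
      rw [hw k l hEk]; ring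
    rw [hsum]; ring
  have hsplit : ∑ k, (∑ l, rr k l ^ 2) * g k =
      ∑ k ∈ Finset.univ.filter Ei, (∑ l, rr k l ^ 2) * g k +
      ∑ k ∈ Finset.univ.filter (fun k => ¬ Ei k), (∑ l, rr k l ^ 2) * g k :=
    (Finset.sum_filter_add_sum_filter_not Finset.univ Ei _).symm
  have hP0 : P ≠ 0 := by
    intro h0
    have := congrArg (eval (Fin.cons ai (fun _ : Fin 1 => bi))) h0
    rw [eval_gHole, map_zero] at this
    simp only [Fin.cons_zero, Fin.cons_one] at this
    have hρ := hρpos i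
    nlinarith [this]
  have hbig : P * (C di * C dj * Q) = P * (P * (A₀ + B) + Q ^ 2 * τ) := by
    calc P * (C di * C dj * Q) = g i * g j := by rw [hgi, hgj]; ring
      _ = ∑ l, r l ^ 2 + ∑ k, (∑ l, rr k l ^ 2) * g k := hrep
      _ = P ^ 2 * A₀ + (P * (Q ^ 2 * τ) + P ^ 2 * B) := by rw [h1, hsplit, h2, h3]
      _ = P * (P * (A₀ + B) + Q ^ 2 * τ) := by ring
  have hcancel : C (di * dj) * Q = P * (A₀ + B) + Q ^ 2 * τ := by
    have := mul_left_cancel₀ hP0 hbig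
    rw [map_mul]
    exact this
  have hctrne : ((ai, bi) : ℝ × ℝ) ≠ (aj, bj) := by
    rw [← hctr_i, ← hctr_j]; exact hij
  exact endgame ai bi ρi aj bj ρj (hρpos i) (hρpos j) hctrne (di * dj)
    (mul_ne_zero hdi hdj) (A₀ + B) τ hcancel
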